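/- Define h(n) = 0!·1!·⋯·(n-1)!. For m,n,b,c,d nonnegative integers with b+c+d = n-1, the quantity (1/4)m(m-1) + (1/4)n(3n+1) + (1/2)(m+c)(b+d) - (1/4)(m-n)(m-b+c-d) is a nonnegative integer, and 2 raised to this power times h(m+n+1)·h(n-b)·h(m-c)·h(n-d)/(h(m+b+1)·h(n+c+1)·h(m+d+1)) is a positive integer, provided b ≤ n, c ≤ m, d ≤ n. -/

import Mathlib

open Nat

/-- The hyperfactorial h(n) = 0!·1!·⋯·(n-1)!. -/
def hyp (n : ℕ) : ℕ := ∏ i ∈ Finset.range n, i !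

lemma hyp_pos' (n : ℕ) : 0 < hyp n := Finset.prod_pos (fun i _ => Nat.factorial_pos i)

lemma hyp_add' (a b : ℕ) : hyp (a + b) = hyp a * ∏ k ∈ Finset.range b, (a + k)! := by
  induction b with
  | zero => simp [hyp]
  | succ b ih =>
      rw [← Nat.add_assoc, show hyp (a+b+1) = hyp (a+b) * (a+b)! from Finset.prod_range_succ _ _,
        ih, Finset.prod_range_succ, mul_assoc]

lemma fact_prod' (a x : ℕ) : a ! * ∏ t ∈ Finset.range x, (a + 1 + t) = (a + x)! := by
  induction x with
  | zero => simp
  | succ x ih =>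
      rw [Finset.prod_range_succ, ← mul_assoc, ih,
        show a + (x+1) = (a+x) + 1 by omega, Nat.factorial_succ]
      ring

/-- the double product of pairwise differences for the two-block sequence -/
lemma key_identity' (x y z : ℕ) :
    (∏ i ∈ Finset.range (x+y), ∏ j ∈ Finset.Ico (i+1) (x+y),
      ((if j < y then j else j + z) - (if i < y then i else i + z))) * (hyp (x+z) * hyp (y+z))
    = hyp x * hyp y * hyp z * hyp (x+y+z) := by
  have hinner1 : ∀ i < y, (∏ j ∈ Finset.Ico (i+1) (x+y),
      ((if j < y then j else j + z) - (if i < y then i else i + z)))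
      = (y-1-i)! * ∏ t ∈ Finset.range x, (z + (y-1-i) + 1 + t) := by
    intro i hi
    rw [← Finset.prod_Ico_consecutive _ (show i+1 ≤ y by omega) (show y ≤ x+y by omega)]
    congr 1
    · rw [Finset.prod_Ico_eq_prod_range]
      rw [Finset.prod_congr rfl (fun t ht => ?_), Finset.prod_range_add_one_eq_factorial]
      · congr 1; omega
      · simp only [Finset.mem_range] at ht
        rw [if_pos (by omega), if_pos hi]
        omega
    · rw [Finset.prod_Ico_eq_prod_range]
      rw [show x + y - y = x by omega]
      refine Finset.prod_congr rfl (fun t ht => ?_)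
      simp only [Finset.mem_range] at ht
      rw [if_neg (by omega), if_pos hi]
      omega
  have hinner2 : ∀ i, y ≤ i → (∏ j ∈ Finset.Ico (i+1) (x+y),
      ((if j < y then j else j + z) - (if i < y then i else i + z)))
      = (x+y-1-i)! := by
    intro i hi
    rw [Finset.prod_Ico_eq_prod_range]
    rw [Finset.prod_congr rfl (fun t ht => ?_), Finset.prod_range_add_one_eq_factorial]
    · congr 1; omega
    · simp only [Finset.mem_range] at ht
      rw [if_neg (by omega), if_neg (by omega)]
      omega
  rw [← Finset.prod_range_mul_prod_Ico _ (show y ≤ x+y by omega)]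
  rw [Finset.prod_congr rfl (fun i hi => hinner1 i (Finset.mem_range.mp hi))]
  rw [Finset.prod_congr rfl (fun i hi => hinner2 i (Finset.mem_Ico.mp hi).1)]
  rw [show (∏ i ∈ Finset.range y, ((y-1-i)! * ∏ t ∈ Finset.range x, (z + (y-1-i) + 1 + t)))
      = ∏ k ∈ Finset.range y, (k ! * ∏ t ∈ Finset.range x, (z + k + 1 + t)) from
    Finset.prod_range_reflect (fun k => k ! * ∏ t ∈ Finset.range x, (z + k + 1 + t)) y]
  rw [Finset.prod_Ico_eq_prod_range]
  rw [show x + y - y = x by omega]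
  rw [Finset.prod_congr rfl (fun t ht => show (x+y-1-(y+t))! = (x-1-t)! by congr 1; omega)]
  rw [show (∏ t ∈ Finset.range x, (x-1-t)!) = ∏ t ∈ Finset.range x, t !
    from Finset.prod_range_reflect (fun t => t !) x]
  rw [Finset.prod_mul_distrib]
  have e1 : hyp (y+z) = hyp z * ∏ k ∈ Finset.range y, (z + k)! := by
    rw [show y + z = z + y by omega, hyp_add']
  have e2 : hyp (x+y+z) = hyp (x+z) * ∏ k ∈ Finset.range y, (x + z + k)! := by
    rw [show x + y + z = (x+z) + y by omega, hyp_add']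
  have e3 : (∏ k ∈ Finset.range y, (z+k)!) *
      ∏ k ∈ Finset.range y, (∏ t ∈ Finset.range x, (z + k + 1 + t))
      = ∏ k ∈ Finset.range y, (x + z + k)! := by
    rw [← Finset.prod_mul_distrib]
    refine Finset.prod_congr rfl (fun k hk => ?_)
    rw [show x + z + k = (z + k) + x by omega, ← fact_prod' (z+k) x]
  rw [e1, e2, ← e3]
  show (∏ k ∈ Finset.range y, k !) *
      (∏ k ∈ Finset.range y, ∏ t ∈ Finset.range x, (z + k + 1 + t)) *
      (∏ t ∈ Finset.range x, t !)
      * (hyp (x + z) * (hyp z * ∏ k ∈ Finset.range y, (z + k)!))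
    = (∏ t ∈ Finset.range x, t !) * (∏ k ∈ Finset.range y, k !) * hyp z
      * (hyp (x + z) * ((∏ k ∈ Finset.range y, (z + k)!) *
          ∏ k ∈ Finset.range y, ∏ t ∈ Finset.range x, (z + k + 1 + t)))
  ring

/-- hyp (N+1) divides the double product of pairwise differences of the two-block sequence -/
lemma hyp_dvd_prod' (y z N : ℕ) :
    hyp (N+1) ∣ ∏ i ∈ Finset.range (N+1), ∏ j ∈ Finset.Ico (i+1) (N+1),
      ((if j < y then j else j + z) - (if i < y then i else i + z)) := by
  set w : ℕ → ℕ := fun t => if t < y then t else t + z with hw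
  have wmono : ∀ {i j : ℕ}, i ≤ j → w i ≤ w j := by
    intro i j hij
    simp only [hw]
    split_ifs <;> omega
  have h1 := Matrix.superFactorial_dvd_vandermonde_det (n := N) (fun i : Fin (N+1) => (w i : ℤ))
  rw [Matrix.det_vandermonde] at h1
  have h2 : (∏ i : Fin (N+1), ∏ j ∈ Finset.Ioi i, ((w j : ℤ) - (w i : ℤ)))
      = ((∏ i ∈ Finset.range (N+1), ∏ j ∈ Finset.Ico (i+1) (N+1), (w j - w i) : ℕ) : ℤ) := by
    have inner_eq : ∀ i : Fin (N+1), (∏ j ∈ Finset.Ioi i, ((w j : ℤ) - (w i : ℤ)))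
        = ∏ j ∈ Finset.Ico (i.val+1) (N+1), ((w j : ℤ) - (w i.val : ℤ)) := by
      intro i
      have hm : ((Finset.Ioi i).map Fin.valEmbedding) = Finset.Ico (i.val+1) (N+1) := by
        rw [Fin.map_valEmbedding_Ioi, ← Finset.Ico_add_one_left_eq_Ioo]
      rw [← hm, Finset.prod_map]
      rfl
    rw [Finset.prod_congr rfl (fun i _ => inner_eq i)]
    rw [Fin.prod_univ_eq_prod_range
      (fun i => ∏ j ∈ Finset.Ico (i+1) (N+1), ((w j : ℤ) - (w i : ℤ)))]
    rw [Nat.cast_prod]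
    refine Finset.prod_congr rfl (fun i _ => ?_)
    rw [Nat.cast_prod]
    refine Finset.prod_congr rfl (fun j hj => ?_)
    rw [Nat.cast_sub (wmono (by simp only [Finset.mem_Ico] at hj; omega))]
  rw [h2] at h1
  have h3 : hyp (N+1) = Nat.superFactorial N := Nat.prod_range_succ_factorial N
  rw [h3]
  exact_mod_cast h1

/-- Corollary 3.2: the exponent of 2 in the T-region formula is a nonnegative integer,
and the full formula is a positive integer. -/
theorem stmt_8 (m n b c d : ℕ)
    (hbal : (b : ℤ) + c + d = (n : ℤ) - 1)
    (hbn : b ≤ n) (hcm : c ≤ m) (hdn : d ≤ n) :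
    ∃ E : ℕ, (E : ℚ) =
        (m * (m - 1 : ℚ)) / 4 + (n * (3 * n + 1)) / 4
          + ((m + c) * (b + d)) / 2
          - ((m : ℚ) - n) * ((m : ℚ) - b + c - d) / 4 ∧
      ∃ N : ℕ, 0 < N ∧ (N : ℚ) =
        2 ^ E * (hyp (m + n + 1) * hyp (n - b) * hyp (m - c) * hyp (n - d)) /
          (hyp (m + b + 1) * hyp (n + c + 1) * hyp (m + d + 1)) := by
  have hb : b + c + d + 1 = n := by
    have : ((b + c + d + 1 : ℕ) : ℤ) = (n : ℤ) := by push_cast; linarith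
    exact_mod_cast this
  -- the exponent E
  obtain ⟨t, ht⟩ : ∃ t, (n - c) * (n + c + 1) = 2 * t := by
    rcases Nat.even_or_odd (n - c) with h | h
    · obtain ⟨u, hu⟩ := h
      exact ⟨u * (n + c + 1), by rw [hu]; ring⟩
    · obtain ⟨u, hu⟩ := h
      have hcn : c ≤ n := by omega
      refine ⟨(n - c) * ((n + c + 1)/2), ?_⟩
      have h2 : 2 ∣ n + c + 1 := by omega
      obtain ⟨v, hv⟩ := h2
      rw [hv, Nat.mul_div_cancel_left _ (by norm_num)]
      ring
  refine ⟨m * (n - c - 1) + c * n + t, ?_, ?_⟩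
  · -- cast computation for E
    have hcn1 : c + 1 ≤ n := by omega
    have e1 : ((n - c - 1 : ℕ) : ℚ) = (n : ℚ) - c - 1 := by
      rw [Nat.sub_sub, Nat.cast_sub hcn1]
      push_cast
      ring
    have htQ : ((n : ℚ) - c) * ((n : ℚ) + c + 1) = 2 * t := by
      have := congrArg (Nat.cast : ℕ → ℚ) ht
      push_cast [Nat.cast_sub (show c ≤ n by omega)] at this
      linarith [this]
    have hdQ : (d : ℚ) = (n : ℚ) - 1 - b - c := by
      have : ((b : ℚ) + c + d) = (n : ℚ) - 1 := by exact_mod_cast hbal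
      linarith
    rw [hdQ]
    push_cast
    rw [e1]
    linear_combination (-1/2 : ℚ) * htQ
  -- the number N
  · set x := n - b with hxdef
    set y := m - c with hydef
    set z := n - d with hzdef
    have hx : x + b = n := by omega
    have hy : y + c = m := by omega
    have hz : z + d = n := by omega
    have hxy : x + y = m + d + 1 := by omega
    have hxz : x + z = n + c + 1 := by omega
    have hyz : y + z = m + b + 1 := by omega
    have hxyz : x + y + z = m + n + 1 := by omega
    set D := ∏ i ∈ Finset.range (x+y), ∏ j ∈ Finset.Ico (i+1) (x+y),
      ((if j < y then j else j + z) - (if i < y then i else i + z)) with hDdef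
    have key := key_identity' x y z
    rw [← hDdef] at key
    have hdvd : hyp (x+y) ∣ D := by
      rw [hDdef, hxy]
      exact hyp_dvd_prod' y z (m + d)
    have hDpos : 0 < D := by
      rcases Nat.eq_zero_or_pos D with h0 | h0
      · exfalso
        rw [h0, zero_mul] at key
        have hp : 0 < hyp x * hyp y * hyp z * hyp (x+y+z) :=
          mul_pos (mul_pos (mul_pos (hyp_pos' x) (hyp_pos' y)) (hyp_pos' z)) (hyp_pos' (x+y+z))
        omega
      · exact h0
    set Q := D / hyp (x+y) with hQdef
    have hQ : hyp (x+y) * Q = D := Nat.mul_div_cancel' hdvd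
    have hQpos : 0 < Q := by
      rcases Nat.eq_zero_or_pos Q with h0 | h0
      · exfalso; rw [h0, mul_zero] at hQ; omega
      · exact h0
    refine ⟨2 ^ (m * (n - c - 1) + c * n + t) * Q, by positivity, ?_⟩
    have keyN : Q * (hyp (x+y) * hyp (x+z) * hyp (y+z))
        = hyp x * hyp y * hyp z * hyp (x+y+z) := by
      rw [← key, ← hQ]; ring
    have keyQ : (Q : ℚ) * ((hyp (x+y) : ℚ) * hyp (x+z) * hyp (y+z))
        = (hyp x : ℚ) * hyp y * hyp z * hyp (x+y+z) := by exact_mod_cast keyN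
    rw [show m + n + 1 = x + y + z from hxyz.symm,
        show m + b + 1 = y + z from hyz.symm,
        show n + c + 1 = x + z from hxz.symm,
        show m + d + 1 = x + y from hxy.symm]
    have hne : ((hyp (y+z) : ℚ) * hyp (x+z) * hyp (x+y)) ≠ 0 := by
      have := hyp_pos' (y+z); have := hyp_pos' (x+z); have := hyp_pos' (x+y)
      positivity
    rw [eq_div_iff hne]
    push_cast
    linear_combination (2 : ℚ) ^ (m * (n - c - 1) + c * n + t) * keyQ
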